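/- Let n be even, n ≥ 4, ε a primitive n-th root of unity, h_p(z) = εz and h_q(z) = εz + (ε - 1) affine maps of ℂ. Then h_q^{l₁}∘h_p^{l₂} = h_p^{k₁}∘h_q^{k₂} with l₁, l₂, k₁, k₂ not divisible by n holds if and only if there exists l with 2l ≢ 0 (mod n) such that l₁ ≡ l, l₂ ≡ -l + n/2, k₁ ≡ l + n/2, k₂ ≡ -l (mod n). -/

import Mathlib

/-- The group of affine transformations `z ↦ a z + b` of `ℂ` (with `a ≠ 0`),
under composition. -/
@[ext]
structure Aff where
  a : ℂˣ
  b : ℂ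

namespace Aff

instance : Mul Aff := ⟨fun x y => ⟨x.a * y.a, (x.a : ℂ) * y.b + x.b⟩⟩
instance : One Aff := ⟨⟨1, 0⟩⟩
instance : Inv Aff := ⟨fun x => ⟨x.a⁻¹, -(((x.a⁻¹ : ℂˣ) : ℂ) * x.b)⟩⟩

@[simp] lemma mul_a (x y : Aff) : (x * y).a = x.a * y.a := rfl
@[simp] lemma mul_b (x y : Aff) : (x * y).b = (x.a : ℂ) * y.b + x.b := rfl
@[simp] lemma one_a : (1 : Aff).a = 1 := rfl
@[simp] lemma one_b : (1 : Aff).b = 0 := rfl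
@[simp] lemma inv_a (x : Aff) : x⁻¹.a = x.a⁻¹ := rfl
@[simp] lemma inv_b (x : Aff) : x⁻¹.b = -(((x.a⁻¹ : ℂˣ) : ℂ) * x.b) := rfl

instance : Group Aff where
  mul_assoc x y z := by
    ext
    · simp [mul_assoc]
    · simp; ring
  one_mul x := by ext <;> simp
  mul_one x := by ext <;> simp
  inv_mul_cancel x := by
    ext
    · simp
    · have h : ((x.a : ℂ)) ≠ 0 := x.a.ne_zero
      rw [mul_b, inv_b, one_b, inv_a]; ring

/-- `Aff.apply g z = a z + b`: the action of an affine map on `ℂ`. -/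
def apply (g : Aff) (z : ℂ) : ℂ := (g.a : ℂ) * z + g.b

end Aff

def diagHom : ℂˣ →* Aff where
  toFun u := ⟨u, 0⟩
  map_one' := rfl
  map_mul' u v := by ext <;> simp

lemma zpow_diag (u : ℂˣ) (m : ℤ) : (⟨u, 0⟩ : Aff) ^ m = ⟨u ^ m, 0⟩ :=
  (map_zpow diagHom u m).symm

lemma zpow_q (u : ℂˣ) (m : ℤ) :
    (⟨u, (u : ℂ) - 1⟩ : Aff) ^ m = ⟨u ^ m, ((u ^ m : ℂˣ) : ℂ) - 1⟩ := by
  have h1 : (⟨u, (u : ℂ) - 1⟩ : Aff) = MulAut.conj (⟨1, 1⟩ : Aff)⁻¹ ⟨u, 0⟩ := by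
    ext <;> simp [MulAut.conj, sub_eq_add_neg]
  rw [h1, ← map_zpow, zpow_diag]
  ext <;> simp [MulAut.conj, sub_eq_add_neg]

theorem stmt_15 (n : ℕ) (hne : Even n) (hn : 4 ≤ n) (ε : ℂˣ)
    (hε : IsPrimitiveRoot ε n)
    (hp hq : Aff) (hhp : hp = ⟨ε, 0⟩) (hhq : hq = ⟨ε, (ε : ℂ) - 1⟩)
    (l₁ l₂ k₁ k₂ : ℤ)
    (h₁ : ¬ (n : ℤ) ∣ l₁) (h₂ : ¬ (n : ℤ) ∣ l₂)
    (h₃ : ¬ (n : ℤ) ∣ k₁) (h₄ : ¬ (n : ℤ) ∣ k₂) :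
    hq ^ l₁ * hp ^ l₂ = hp ^ k₁ * hq ^ k₂ ↔
      ∃ l : ℤ, ¬ (n : ℤ) ∣ 2 * l ∧
        l₁ ≡ l [ZMOD (n : ℤ)] ∧ l₂ ≡ -l + (n : ℤ) / 2 [ZMOD (n : ℤ)] ∧
        k₁ ≡ l + (n : ℤ) / 2 [ZMOD (n : ℤ)] ∧ k₂ ≡ -l [ZMOD (n : ℤ)] := by
  subst hhp hhq
  obtain ⟨c, hc⟩ := hne
  have hεc : (ε : ℂ) ≠ 0 := ε.ne_zero
  have hone : ∀ a : ℤ, ((ε : ℂ) ^ a = 1 ↔ (n : ℤ) ∣ a) := by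
    intro a
    rw [← Units.val_zpow_eq_zpow_val, Units.val_eq_one]
    exact hε.zpow_eq_one_iff_dvd a
  have hkey : ∀ a b : ℤ, ((ε : ℂ) ^ a = (ε : ℂ) ^ b ↔ a ≡ b [ZMOD (n : ℤ)]) := by
    intro a b
    rw [Int.modEq_iff_dvd, ← hone (b - a), zpow_sub₀ hεc,
      div_eq_one_iff_eq (zpow_ne_zero _ hεc)]
    exact eq_comm
  have hhalf : (ε : ℂ) ^ ((n : ℤ) / 2) = -1 := by
    have hsq : (ε : ℂ) ^ ((n : ℤ) / 2) * (ε : ℂ) ^ ((n : ℤ) / 2) = 1 := by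
      rw [← zpow_add₀ hεc, show (n : ℤ) / 2 + (n : ℤ) / 2 = (n : ℤ) by omega]
      exact (hone n).mpr dvd_rfl
    have hne1 : (ε : ℂ) ^ ((n : ℤ) / 2) ≠ 1 := by
      rw [Ne, hone]
      intro hd
      have := Int.le_of_dvd (by omega) hd
      omega
    rcases mul_self_eq_one_iff.mp hsq with h | h
    · exact absurd h hne1
    · exact h
  rw [zpow_q, zpow_q, zpow_diag, zpow_diag, Aff.ext_iff]
  simp only [Aff.mul_a, Aff.mul_b, Units.ext_iff, Units.val_mul,
    Units.val_zpow_eq_zpow_val, mul_zero, zero_add, add_zero]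
  have hx1 : (ε : ℂ) ^ l₁ ≠ 1 := fun h => h₁ ((hone l₁).mp h)
  have hy1 : (ε : ℂ) ^ k₁ ≠ 1 := fun h => h₃ ((hone k₁).mp h)
  have hC : (ε : ℂ) ^ l₁ * (ε : ℂ) ^ (-l₁) = 1 := by rw [← zpow_add₀ hεc]; simp
  have hD : (ε : ℂ) ^ k₁ * (ε : ℂ) ^ (-k₁) = 1 := by rw [← zpow_add₀ hεc]; simp
  have hE : (ε : ℂ) ^ k₂ * (ε : ℂ) ^ (-k₂) = 1 := by rw [← zpow_add₀ hεc]; simp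
  constructor
  · rintro ⟨ha, hb⟩
    have hnorm : ‖(ε : ℂ)‖ = 1 := by
      have h1 : ((ε : ℂ)) ^ (n : ℕ) = 1 := by
        rw [← Units.val_pow_eq_pow_val, hε.pow_eq_one, Units.val_one]
      have h2 := Complex.norm_eq_one_of_pow_eq_one h1 (by omega : n ≠ 0)
      simpa using h2
    have heps : (starRingEnd ℂ) (ε : ℂ) = (ε : ℂ)⁻¹ := by
      apply eq_inv_of_mul_eq_one_left
      rw [mul_comm, Complex.mul_conj, Complex.normSq_eq_norm_sq, hnorm]
      norm_num
    have hconj : ∀ a : ℤ, (starRingEnd ℂ) ((ε : ℂ) ^ a) = (ε : ℂ) ^ (-a) := by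
      intro a
      rw [map_zpow₀, heps, inv_zpow, ← zpow_neg]
    have hbc : (ε : ℂ) ^ (-l₁) - 1 = (ε : ℂ) ^ (-k₁) * ((ε : ℂ) ^ (-k₂) - 1) := by
      have h := congrArg (starRingEnd ℂ) hb
      rw [map_sub, map_one, map_mul, map_sub, map_one, hconj, hconj, hconj] at h
      exact h
    have hmul : ((ε : ℂ) ^ l₁ - 1) * ((ε : ℂ) ^ (-l₁) - 1)
        = ((ε : ℂ) ^ k₂ - 1) * ((ε : ℂ) ^ (-k₂) - 1) := by
      calc ((ε : ℂ) ^ l₁ - 1) * ((ε : ℂ) ^ (-l₁) - 1)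
          = ((ε : ℂ) ^ k₁ * ((ε : ℂ) ^ k₂ - 1)) * ((ε : ℂ) ^ (-k₁) * ((ε : ℂ) ^ (-k₂) - 1)) := by
            rw [← hb, ← hbc]
        _ = ((ε : ℂ) ^ k₁ * (ε : ℂ) ^ (-k₁)) * (((ε : ℂ) ^ k₂ - 1) * ((ε : ℂ) ^ (-k₂) - 1)) := by
            ring
        _ = ((ε : ℂ) ^ k₂ - 1) * ((ε : ℂ) ^ (-k₂) - 1) := by rw [hD, one_mul]
    have hsum : (ε : ℂ) ^ l₁ + (ε : ℂ) ^ (-l₁) = (ε : ℂ) ^ k₂ + (ε : ℂ) ^ (-k₂) := by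
      linear_combination (-1 : ℂ) * hmul + hC - hE
    have hfac : ((ε : ℂ) ^ k₂ - (ε : ℂ) ^ l₁) * ((ε : ℂ) ^ l₁ * (ε : ℂ) ^ k₂ - 1) = 0 := by
      linear_combination (-((ε : ℂ) ^ l₁ * (ε : ℂ) ^ k₂)) * hsum
        + (ε : ℂ) ^ k₂ * hC + (-(ε : ℂ) ^ l₁) * hE
    rcases mul_eq_zero.mp hfac with hcase | hcase
    · exfalso
      have hzx : (ε : ℂ) ^ k₂ = (ε : ℂ) ^ l₁ := sub_eq_zero.mp hcase
      rw [hzx] at hb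
      have h5 : ((ε : ℂ) ^ k₁ - 1) * ((ε : ℂ) ^ l₁ - 1) = 0 := by linear_combination -hb
      rcases mul_eq_zero.mp h5 with h | h
      · exact hy1 (by linear_combination h)
      · exact hx1 (by linear_combination h)
    · have hxz1 : (ε : ℂ) ^ l₁ * (ε : ℂ) ^ k₂ = 1 := by linear_combination hcase
      have hzx' : (ε : ℂ) ^ k₂ = (ε : ℂ) ^ (-l₁) := by
        calc (ε : ℂ) ^ k₂ = ((ε : ℂ) ^ l₁ * (ε : ℂ) ^ (-l₁)) * (ε : ℂ) ^ k₂ := by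
              rw [hC, one_mul]
          _ = ((ε : ℂ) ^ l₁ * (ε : ℂ) ^ k₂) * (ε : ℂ) ^ (-l₁) := by ring
          _ = (ε : ℂ) ^ (-l₁) := by rw [hxz1, one_mul]
      rw [hzx'] at hb
      have hy : (ε : ℂ) ^ k₁ = -(ε : ℂ) ^ l₁ := by
        have h5 : ((ε : ℂ) ^ k₁ + (ε : ℂ) ^ l₁) * ((ε : ℂ) ^ l₁ - 1) = 0 := by
          linear_combination (ε : ℂ) ^ l₁ * hb + (ε : ℂ) ^ k₁ * hC
        rcases mul_eq_zero.mp h5 with h | h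
        · linear_combination h
        · exact absurd (by linear_combination h : (ε : ℂ) ^ l₁ = 1) hx1
      refine ⟨l₁, ?_, Int.ModEq.refl _, ?_, ?_, ?_⟩
      · intro hd
        have hxx : (ε : ℂ) ^ l₁ * (ε : ℂ) ^ l₁ = 1 := by
          rw [← zpow_add₀ hεc, show l₁ + l₁ = 2 * l₁ by ring]
          exact (hone _).mpr hd
        rcases mul_self_eq_one_iff.mp hxx with h | h
        · exact hx1 h
        · exact hy1 (by rw [hy, h]; norm_num)
      · apply (hkey l₂ (-l₁ + (n : ℤ) / 2)).mp
        have hhalf2 : (ε : ℂ) ^ (-l₁ + (n : ℤ) / 2) = -(ε : ℂ) ^ (-l₁) := by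
          rw [zpow_add₀ hεc, hhalf]; ring
        apply mul_left_cancel₀ (zpow_ne_zero l₁ hεc : (ε : ℂ) ^ l₁ ≠ 0)
        rw [ha, hy, hzx', hhalf2]
        ring
      · apply (hkey k₁ (l₁ + (n : ℤ) / 2)).mp
        rw [hy, zpow_add₀ hεc, hhalf]
        ring
      · exact (hkey k₂ (-l₁)).mp hzx'
  · rintro ⟨l, hl, e1, e2, e3, e4⟩
    have f1 : (ε : ℂ) ^ l₁ = (ε : ℂ) ^ l := (hkey _ _).mpr e1
    have f2 : (ε : ℂ) ^ l₂ = (ε : ℂ) ^ (-l + (n : ℤ) / 2) := (hkey _ _).mpr e2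
    have f3 : (ε : ℂ) ^ k₁ = (ε : ℂ) ^ (l + (n : ℤ) / 2) := (hkey _ _).mpr e3
    have f4 : (ε : ℂ) ^ k₂ = (ε : ℂ) ^ (-l) := (hkey _ _).mpr e4
    have h6 : (ε : ℂ) ^ l * (ε : ℂ) ^ (-l) = 1 := by
      rw [← zpow_add₀ hεc]; simp
    constructor
    · rw [f1, f2, f3, f4, ← zpow_add₀ hεc, ← zpow_add₀ hεc]
      congr 1
      ring
    · rw [f1, f3, f4, zpow_add₀ hεc l, hhalf]
      linear_combination h6
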